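/- Let G be a finite 2-qBMG and let s be a vertex of G. Let G′ be the digraph obtained from G by adding one new vertex s′, placed in the same color class as s, together with exactly the new edges s′u for every u ∈ N⁺(s) and vs′ for every v ∈ N⁻(s) (in particular there is no edge between s and s′). Then G′ is a 2-qBMG, and s ∼̇ s′ in G′. -/
import Mathlib


/-- Two vertices are equivalent (`x ∼̇ y`) if they have the same
out-neighbors and the same in-neighbors. -/
def dotSim {V : Type*} (E : V → V → Prop) (x y : V) : Prop :=
  (∀ z, E x z ↔ E y z) ∧ (∀ z, E z x ↔ E z y)

/-- `U` and `W` are the color classes of a 2-colored digraph with edge relation `E`: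
they partition the vertex set and every edge has one endpoint in each class. -/
def IsTwoColored {V : Type*} (E : V → V → Prop) (U W : Set V) : Prop :=
  (∀ v, v ∈ U ∨ v ∈ W) ∧ (∀ v, ¬(v ∈ U ∧ v ∈ W)) ∧
    ∀ u v, E u v → (u ∈ U ∧ v ∈ W) ∨ (u ∈ W ∧ v ∈ U)

/-- Axiom (N1). -/
def AxN1 {V : Type*} (E : V → V → Prop) : Prop :=
  ∀ u v, u ≠ v → ¬E u v → ¬E v u → ∀ w t, ¬(E u t ∧ E v w ∧ E t w)

/-- Axiom (N2): bi-transitivity. -/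
def AxN2 {V : Type*} (E : V → V → Prop) : Prop :=
  ∀ u v w t, E u v → E v w → E w t → E u t

/-- Axiom (N3). -/
def AxN3 {V : Type*} (E : V → V → Prop) : Prop :=
  ∀ u v w, E u w → E v w → (∀ z, E u z → E v z) ∨ (∀ z, E v z → E u z)

/-- A 2-qBMG: an irreflexive 2-colored digraph satisfying (N1), (N2), (N3). -/
def IsQBMG {V : Type*} (E : V → V → Prop) (U W : Set V) : Prop :=
  (∀ v, ¬E v v) ∧ IsTwoColored E U W ∧ AxN1 E ∧ AxN2 E ∧ AxN3 E

/-- An automorphism of the digraph: a permutation mapping edges to edges. -/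
def IsAut {V : Type*} (E : V → V → Prop) (π : Equiv.Perm V) : Prop :=
  ∀ u v, E u v → E (π u) (π v)

/-- A color-preserving automorphism of the 2-colored digraph. -/
def IsAutI {V : Type*} (E : V → V → Prop) (U W : Set V) (π : Equiv.Perm V) : Prop :=
  IsAut E π ∧ (∀ v ∈ U, π v ∈ U) ∧ (∀ v ∈ W, π v ∈ W)

/-- The edge relation of the blow-up `G′` of `G` at the vertex `s`: the new vertex
(`none`) gets exactly the edges `s′u` for `u ∈ N⁺(s)` and `vs′` for `v ∈ N⁻(s)`;
in particular there is no edge between `s` and `s′`. -/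
def blowUpEdges {V : Type*} (E : V → V → Prop) (s : V) :
    Option V → Option V → Prop
  | some u, some v => E u v
  | none, some v => E s v
  | some u, none => E u s
  | none, none => False

/-- The color class of the blow-up containing a given color class `C` of `G`:
the new vertex `s′` is added to `C` precisely when `s ∈ C`. -/
def blowUpColor {V : Type*} (C : Set V) (s : V) : Set (Option V) :=
  {o : Option V | (∃ u ∈ C, o = some u) ∨ (o = none ∧ s ∈ C)}

/-- Let `G` be a finite 2-qBMG and `s` a vertex.  The digraph `G′`
obtained from `G` by adding one new vertex `s′` (in the same color class as `s`)
together with exactly the edges `s′u` for `u ∈ N⁺(s)` and `vs′` for `v ∈ N⁻(s)`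
is again a 2-qBMG, and `s ∼̇ s′` in `G′`. -/
theorem stmt_6 {V : Type*} [Fintype V] [DecidableEq V] (E : V → V → Prop) (U W : Set V)
    (hG : IsQBMG E U W) (s : V) :
    IsQBMG (blowUpEdges E s) (blowUpColor U s) (blowUpColor W s) ∧
      dotSim (blowUpEdges E s) (some s) none := by

  obtain ⟨hirr, ⟨hcov, hdisj, hedge⟩, hN1, hN2, hN3⟩ := hG
  set rep : Option V → V := fun o => o.getD s with hrep
  have hE : ∀ x y, blowUpEdges E s x y ↔ E (rep x) (rep y) := by
    intro x y
    cases x <;> cases y <;> simp [blowUpEdges, rep, hirr s]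
  have hC : ∀ (C : Set V) (o : Option V), o ∈ blowUpColor C s ↔ rep o ∈ C := by
    intro C o
    cases o <;> simp [blowUpColor, rep]
  refine ⟨⟨?_, ⟨?_, ?_, ?_⟩, ?_, ?_, ?_⟩, ?_, ?_⟩
  · intro v; rw [hE]; exact hirr _
  · intro v; rcases hcov (rep v) with h | h
    · exact Or.inl ((hC U v).mpr h)
    · exact Or.inr ((hC W v).mpr h)
  · intro v ⟨h1, h2⟩; exact hdisj (rep v) ⟨(hC U v).mp h1, (hC W v).mp h2⟩
  · intro u v h
    rcases hedge _ _ ((hE u v).mp h) with ⟨h1, h2⟩ | ⟨h1, h2⟩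
    · exact Or.inl ⟨(hC U u).mpr h1, (hC W v).mpr h2⟩
    · exact Or.inr ⟨(hC W u).mpr h1, (hC U v).mpr h2⟩
  · intro u v huv h1 h2 w t ⟨hut, hvw, htw⟩
    rw [hE] at h1 h2 hut hvw htw
    by_cases hrv : rep u = rep v
    · -- same representative: E ru t' ∧ E ru w' ∧ E t' w' contradicts 2-coloring
      rw [hrv] at hut
      have du := hdisj (rep v)
      have dw := hdisj (rep w)
      have dt := hdisj (rep t)
      rcases hedge _ _ hut with ⟨h2', h3⟩ | ⟨h2', h3⟩ <;>
        rcases hedge _ _ hvw with ⟨h4', h4⟩ | ⟨h4', h4⟩ <;>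
        rcases hedge _ _ htw with ⟨h5, h6⟩ | ⟨h5, h6⟩ <;> tauto
    · exact hN1 (rep u) (rep v) hrv h1 h2 (rep w) (rep t) ⟨hut, hvw, htw⟩
  · intro u v w t h1 h2 h3
    rw [hE] at *
    exact hN2 _ _ _ _ h1 h2 h3
  · intro u v w h1 h2
    rw [hE] at h1 h2
    rcases hN3 _ _ _ h1 h2 with h | h
    · exact Or.inl fun z hz => (hE v z).mpr (h _ ((hE u z).mp hz))
    · exact Or.inr fun z hz => (hE u z).mpr (h _ ((hE v z).mp hz))
  · intro z; cases z <;> simp [blowUpEdges, hirr s]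
  · intro z; cases z <;> simp [blowUpEdges, hirr s]
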